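/- Let T ∈ Mₙ(ℂ) have distinct singular values, let u₁,…,uₙ be unit eigenvectors of T*T with eigenvalues λ₁,…,λₙ, and v₁,…,vₙ unit eigenvectors of TT* with the same eigenvalues. If C is a conjugation on ℂⁿ, then T*T = C(TT*)C if and only if there exist unimodular constants α₁,…,αₙ with C uᵢ = αᵢ vᵢ for all i. -/

import Mathlib

open scoped ComplexConjugate
open Matrix

/-- Paper-convention inner product on ℂⁿ: ⟨x,y⟩ = ∑ xᵢ conj(yᵢ). -/
noncomputable def cinner {n : ℕ} (x y : Fin n → ℂ) : ℂ := ∑ i, x i * conj (y i)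

/-- A conjugation on ℂⁿ: a conjugate-linear isometric involution. -/
structure Conjugation (n : ℕ) where
  toFun : (Fin n → ℂ) → (Fin n → ℂ)
  map_add : ∀ x y, toFun (x + y) = toFun x + toFun y
  map_smul : ∀ (a : ℂ) (x), toFun (a • x) = conj a • toFun x
  isometric : ∀ x y, cinner (toFun x) (toFun y) = cinner y x
  involutive : ∀ x, toFun (toFun x) = x

/-- `T` is unitarily equivalent to a complex symmetric matrix. -/
def UECSM {n : ℕ} (T : Matrix (Fin n) (Fin n) ℂ) : Prop :=
  ∃ Q ∈ Matrix.unitaryGroup (Fin n) ℂ, (Qᴴ * T * Q)ᵀ = Qᴴ * T * Q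

section Helpers

variable {n : ℕ}

lemma cinner_smul_left (a : ℂ) (x y : Fin n → ℂ) : cinner (a • x) y = a * cinner x y := by
  simp [cinner, Finset.mul_sum, mul_assoc]

lemma cinner_smul_right (a : ℂ) (x y : Fin n → ℂ) : cinner x (a • y) = conj a * cinner x y := by
  simp only [cinner, Pi.smul_apply, smul_eq_mul, Finset.mul_sum]
  exact Finset.sum_congr rfl fun i _ => by rw [_root_.map_mul]; ring

lemma cinner_sum_left {s : Finset (Fin n)} (f : Fin n → (Fin n → ℂ)) (y : Fin n → ℂ) :
    cinner (∑ i ∈ s, f i) y = ∑ i ∈ s, cinner (f i) y := by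
  simp [cinner, Finset.sum_apply, Finset.sum_mul]
  exact Finset.sum_comm

lemma cinner_self_eq_zero {x : Fin n → ℂ} (h : cinner x x = 0) : x = 0 := by
  have : ∑ i, (Complex.normSq (x i) : ℂ) = 0 := by
    simpa [cinner, Complex.mul_conj] using h
  rw [← Complex.ofReal_sum] at this
  have h2 : ∑ i, Complex.normSq (x i) = 0 := by exact_mod_cast this
  funext i
  have := (Finset.sum_eq_zero_iff_of_nonneg (fun i _ => Complex.normSq_nonneg (x i))).mp h2 i
    (Finset.mem_univ i)
  exact Complex.normSq_eq_zero.mp this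

lemma cinner_mulVec_left (A : Matrix (Fin n) (Fin n) ℂ) (x y : Fin n → ℂ) :
    cinner (A.mulVec x) y = cinner x (Aᴴ.mulVec y) := by
  simp [cinner, Matrix.mulVec, dotProduct, Finset.sum_mul, Finset.mul_sum, map_sum,
    Matrix.conjTranspose_apply]
  rw [Finset.sum_comm]
  congr 1; ext j; congr 1; ext i; ring

lemma expansion (w : Fin n → (Fin n → ℂ))
    (hw : ∀ i j, cinner (w i) (w j) = if i = j then 1 else 0) (x : Fin n → ℂ) :
    x = ∑ i, cinner x (w i) • w i := by
  have hcoef : ∀ (c : Fin n → ℂ) (j : Fin n), cinner (∑ i, c i • w i) (w j) = c j := by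
    intro c j
    rw [cinner_sum_left]
    simp only [cinner_smul_left, hw]
    simp
  have hli : LinearIndependent ℂ w := by
    rw [Fintype.linearIndependent_iff]
    intro c hc j
    have := hcoef c j
    rw [hc] at this
    simpa [cinner] using this.symm
  have hspan : ⊤ ≤ Submodule.span ℂ (Set.range w) := by
    rcases Nat.eq_zero_or_pos n with h0 | h0
    · subst h0
      intro y _
      have : y = 0 := Subsingleton.elim _ _
      simp [this]
    · have : Nonempty (Fin n) := ⟨⟨0, h0⟩⟩
      rw [hli.span_eq_top_of_card_eq_finrank (by simp)]
  have hx : x ∈ Submodule.span ℂ (Set.range w) := hspan trivial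
  rw [Submodule.mem_span_range_iff_exists_fun] at hx
  obtain ⟨c, hc⟩ := hx
  rw [← hc]
  congr 1; ext i
  rw [hcoef]

lemma eig_ortho (A : Matrix (Fin n) (Fin n) ℂ) (hA : Aᴴ = A) {μ ν : ℝ}
    (hμν : (μ : ℂ) ≠ (ν : ℂ)) {x y : Fin n → ℂ}
    (hx : A.mulVec x = (μ : ℂ) • x) (hy : A.mulVec y = (ν : ℂ) • y) :
    cinner x y = 0 := by
  have h1 : cinner (A.mulVec x) y = cinner x (A.mulVec y) := by
    rw [cinner_mulVec_left, hA]
  rw [hx, hy, cinner_smul_left, cinner_smul_right, Complex.conj_ofReal] at h1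
  have h2 : ((μ : ℂ) - ν) * cinner x y = 0 := by rw [sub_mul, h1, sub_self]
  rcases mul_eq_zero.mp h2 with h | h
  · exact absurd (sub_eq_zero.mp h) hμν
  · exact h

lemma ortho_family (A : Matrix (Fin n) (Fin n) ℂ) (hA : Aᴴ = A) (lam : Fin n → ℝ)
    (w : Fin n → (Fin n → ℂ)) (hdist : Function.Injective lam)
    (hw : ∀ i, A.mulVec (w i) = (lam i : ℂ) • w i) (hw1 : ∀ i, cinner (w i) (w i) = 1) :
    ∀ i j, cinner (w i) (w j) = if i = j then 1 else 0 := by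
  intro i j
  by_cases hij : i = j
  · subst hij; simp [hw1 i]
  · rw [if_neg hij]
    exact eig_ortho A hA (fun h => hij (hdist (by exact_mod_cast h))) (hw i) (hw j)

lemma conj_sum (C : Conjugation n) (f : Fin n → (Fin n → ℂ)) :
    C.toFun (∑ i, f i) = ∑ i, C.toFun (f i) :=
  map_sum (AddMonoidHom.mk' C.toFun C.map_add) f Finset.univ

lemma mulVec_sum' (A : Matrix (Fin n) (Fin n) ℂ) (f : Fin n → (Fin n → ℂ)) :
    A.mulVec (∑ i, f i) = ∑ i, A.mulVec (f i) :=
  map_sum A.mulVecLin f Finset.univ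

end Helpers

theorem conj_intertwines_iff_unimodular {n : ℕ} (T : Matrix (Fin n) (Fin n) ℂ)
    (C : Conjugation n) (lam : Fin n → ℝ) (u v : Fin n → (Fin n → ℂ))
    (hdist : Function.Injective lam)
    (hu : ∀ i, (Tᴴ * T).mulVec (u i) = (lam i : ℂ) • u i)
    (hu1 : ∀ i, cinner (u i) (u i) = 1)
    (hv : ∀ i, (T * Tᴴ).mulVec (v i) = (lam i : ℂ) • v i)
    (hv1 : ∀ i, cinner (v i) (v i) = 1) :
    (∀ x : Fin n → ℂ, (Tᴴ * T).mulVec x = C.toFun ((T * Tᴴ).mulVec (C.toFun x))) ↔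
      ∃ α : Fin n → ℂ, (∀ i, ‖α i‖ = 1) ∧
        ∀ i, C.toFun (u i) = α i • v i := by
  have hA : (Tᴴ * T)ᴴ = Tᴴ * T := by simp [Matrix.conjTranspose_mul]
  have hB : (T * Tᴴ)ᴴ = T * Tᴴ := by simp [Matrix.conjTranspose_mul]
  have hneq : ∀ i j : Fin n, i ≠ j → ((lam i : ℂ) ≠ (lam j : ℂ)) :=
    fun i j hij h => hij (hdist (by exact_mod_cast h))
  have huo := ortho_family _ hA lam u hdist hu hu1
  have hvo := ortho_family _ hB lam v hdist hv hv1
  constructor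
  · intro h
    have hCu_eig : ∀ i, (T * Tᴴ).mulVec (C.toFun (u i)) = (lam i : ℂ) • C.toFun (u i) := by
      intro i
      have h1 := h (u i)
      rw [hu i] at h1
      have h2 := congrArg C.toFun h1
      rw [C.involutive, C.map_smul, Complex.conj_ofReal] at h2
      exact h2.symm
    have key : ∀ i, C.toFun (u i) = cinner (C.toFun (u i)) (v i) • v i := by
      intro i
      calc C.toFun (u i) = ∑ j, cinner (C.toFun (u i)) (v j) • v j := expansion v hvo _
        _ = cinner (C.toFun (u i)) (v i) • v i := by
            apply Finset.sum_eq_single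
            · intro j _ hj
              rw [eig_ortho _ hB (hneq i j (Ne.symm hj)) (hCu_eig i) (hv j), zero_smul]
            · intro hi
              exact absurd (Finset.mem_univ i) hi
    refine ⟨fun i => cinner (C.toFun (u i)) (v i), ?_, key⟩
    intro i
    have h1 : cinner (C.toFun (u i)) (C.toFun (u i)) = 1 := by rw [C.isometric, hu1]
    rw [key i, cinner_smul_left, cinner_smul_right, hv1, mul_one, Complex.mul_conj] at h1
    have h2 : Complex.normSq (cinner (C.toFun (u i)) (v i)) = 1 := by exact_mod_cast h1
    rw [Complex.norm_def, h2, Real.sqrt_one]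
  · rintro ⟨α, hα, hCu⟩ x
    have hαα : ∀ i, α i * conj (α i) = 1 := by
      intro i
      rw [Complex.mul_conj]
      rw [Complex.normSq_eq_norm_sq, hα i]
      norm_num
    have hCv : ∀ i, C.toFun (v i) = α i • u i := by
      intro i
      have h1 := congrArg C.toFun (hCu i)
      rw [C.involutive, C.map_smul] at h1
      calc C.toFun (v i) = (α i * conj (α i)) • C.toFun (v i) := by rw [hαα i, one_smul]
        _ = α i • (conj (α i) • C.toFun (v i)) := by rw [smul_smul]
        _ = α i • u i := by rw [← h1]
    have hx := expansion u huo x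
    set c : Fin n → ℂ := fun i => cinner x (u i) with hc
    have hL : (Tᴴ * T).mulVec x = ∑ i, ((lam i : ℂ) * c i) • u i := by
      conv_lhs => rw [hx]
      rw [mulVec_sum']
      refine Finset.sum_congr rfl fun i _ => ?_
      rw [Matrix.mulVec_smul, hu i, smul_smul, mul_comm]
    have e1 : C.toFun x = ∑ i, (conj (c i) * α i) • v i := by
      conv_lhs => rw [hx]
      rw [conj_sum]
      refine Finset.sum_congr rfl fun i _ => ?_
      rw [C.map_smul, hCu i, smul_smul]
    have e2 : (T * Tᴴ).mulVec (C.toFun x) = ∑ i, (conj (c i) * α i * (lam i : ℂ)) • v i := by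
      rw [e1, mulVec_sum']
      refine Finset.sum_congr rfl fun i _ => ?_
      rw [Matrix.mulVec_smul, hv i, smul_smul]
    have hR : C.toFun ((T * Tᴴ).mulVec (C.toFun x)) = ∑ i, ((lam i : ℂ) * c i) • u i := by
      rw [e2, conj_sum]
      refine Finset.sum_congr rfl fun i _ => ?_
      rw [C.map_smul, hCv i, smul_smul]
      congr 1
      rw [_root_.map_mul, _root_.map_mul, Complex.conj_conj, Complex.conj_ofReal]
      calc c i * conj (α i) * (lam i : ℂ) * α i = (α i * conj (α i)) * ((lam i : ℂ) * c i) := by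
            ring
        _ = (lam i : ℂ) * c i := by rw [hαα i, one_mul]
    rw [hL, hR]
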